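/- If ε > 0 and k = k(n) > (4/3 + ε)·log₂(n), then (2k)!·binomial(n, 2k)·2^{-3k(k-1)/2} → 0 as n → ∞; hence G(n, 1/2) asymptotically almost surely contains no subgraph isomorphic to X_k. -/

import Mathlib

open MeasureTheory Filter
open scoped ENNReal

/-- The Erdős–Rényi random graph measure: each potential edge of `K_n` (indexed by
`Sym2 (Fin n)`; diagonal coordinates are irrelevant) is present independently with
probability `p`. -/
noncomputable def erMeasure (n : ℕ) (p : ℝ) (h1 : p ≤ 1) :
    Measure (Sym2 (Fin n) → Bool) :=
  Measure.pi fun _ =>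
    (PMF.bernoulli (Real.toNNReal p) (Real.toNNReal_le_one.mpr h1)).toMeasure

/-- The graph determined by a sample `ω`. -/
def graphOf {n : ℕ} (ω : Sym2 (Fin n) → Bool) : SimpleGraph (Fin n) :=
  SimpleGraph.fromEdgeSet {e | ω e = true}

/-- The graph `X_k` on vertex set `{u_1,...,u_k} ⊔ {v_1,...,v_k}`: the `u_i` span a clique,
the `v_j` form an independent set, and `u_i ~ v_j` iff `i ≠ j`. -/
def Xgraph (k : ℕ) : SimpleGraph (Fin k ⊕ Fin k) :=
  SimpleGraph.fromRel fun a b =>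
    match a, b with
    | Sum.inl _, Sum.inl _ => True
    | Sum.inl i, Sum.inr j => i ≠ j
    | _, _ => False

theorem Xgraph_adj_ll {k : ℕ} (i j : Fin k) : (Xgraph k).Adj (.inl i) (.inl j) ↔ i ≠ j := by
  simp [Xgraph, SimpleGraph.fromRel_adj]

theorem Xgraph_adj_lr {k : ℕ} (i j : Fin k) : (Xgraph k).Adj (.inl i) (.inr j) ↔ i ≠ j := by
  simp [Xgraph, SimpleGraph.fromRel_adj]

open Finset in
theorem card_lt_filter (k : ℕ) :
    2 * ((Finset.univ.filter fun p : Fin k × Fin k => p.1 < p.2)).card = k * k - k := by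
  have hswap : ((univ.filter fun p : Fin k × Fin k => p.1 < p.2)).card
      = ((univ.filter fun p : Fin k × Fin k => p.2 < p.1)).card :=
    Finset.card_bij' (fun p _ => (p.2, p.1)) (fun p _ => (p.2, p.1))
      (by simp) (by simp) (by simp) (by simp)
  have hsplit : ((univ.filter fun p : Fin k × Fin k => p.1 < p.2)).card
      + ((univ.filter fun p : Fin k × Fin k => p.2 < p.1)).card
      = (univ.offDiag : Finset ((Fin k) × Fin k)).card := by
    rw [← Finset.card_union_of_disjoint]
    · congr 1
      ext p
      simp only [Finset.mem_union, Finset.mem_filter, Finset.mem_univ, true_and,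
        Finset.mem_offDiag]
      exact ne_iff_lt_or_gt.symm
    · rw [Finset.disjoint_filter]
      intro p _ h1 h2
      exact absurd (h1.trans h2) (lt_irrefl _)
  have h2 : (univ.offDiag : Finset ((Fin k) × Fin k)).card = k*k - k := by
    rw [Finset.offDiag_card, Finset.card_univ, Fintype.card_fin]
  omega

open Finset in
theorem Xgraph_edge_lb (k : ℕ) [Fintype (Xgraph k).edgeSet] :
    3 * k * (k - 1) / 2 ≤ (Xgraph k).edgeFinset.card := by
  classical
  set B := ((univ.filter fun p : Fin k × Fin k => p.1 < p.2)).disjSum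
    (univ.offDiag : Finset ((Fin k) × Fin k)) with hB
  have h2 : (univ.offDiag : Finset ((Fin k) × Fin k)).card = k*k - k := by
    rw [Finset.offDiag_card, Finset.card_univ, Fintype.card_fin]
  have hcardB : B.card = (k*k-k)/2 + (k*k-k) := by
    rw [hB, Finset.card_disjSum, h2]
    have h1 := card_lt_filter k
    omega
  have hle : B.card ≤ (Xgraph k).edgeFinset.card := by
    apply Finset.card_le_card_of_injOn
      (fun x => match x with
        | Sum.inl p => s(Sum.inl p.1, Sum.inl p.2)
        | Sum.inr p => s(Sum.inl p.1, Sum.inr p.2))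
    · rintro (p | p) hp
      · simp only [Finset.mem_coe, hB, Finset.inl_mem_disjSum, Finset.mem_filter] at hp
        simp only [Finset.mem_coe, SimpleGraph.mem_edgeFinset, SimpleGraph.mem_edgeSet, Xgraph_adj_ll]
        exact ne_of_lt hp.2
      · simp only [Finset.mem_coe, hB, Finset.inr_mem_disjSum, Finset.mem_offDiag] at hp
        simp only [Finset.mem_coe, SimpleGraph.mem_edgeFinset, SimpleGraph.mem_edgeSet, Xgraph_adj_lr]
        exact hp.2.2
    · rintro (p | p) hp (q | q) hq h
      · simp only [Finset.mem_coe, hB, Finset.inl_mem_disjSum, Finset.mem_filter] at hp hq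
        simp only [Sym2.eq_iff, Sum.inl.injEq] at h
        rcases h with ⟨h1, h2⟩ | ⟨h1, h2⟩
        · simp [Prod.ext_iff, h1, h2]
        · exfalso
          have := hp.2
          rw [h1, h2] at this
          exact absurd (hq.2.trans this) (lt_irrefl _)
      · exfalso; simp only [Sym2.eq_iff] at h; rcases h with ⟨h1, h2⟩ | ⟨h1, h2⟩ <;> simp_all
      · exfalso; simp only [Sym2.eq_iff] at h; rcases h with ⟨h1, h2⟩ | ⟨h1, h2⟩ <;> simp_all
      · simp only [Sym2.eq_iff, Sum.inl.injEq, Sum.inr.injEq] at h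
        rcases h with ⟨h1, h2⟩ | ⟨h1, h2⟩
        · simp [Prod.ext_iff, h1, h2]
        · exact absurd h1 (by simp)
  have harith : 3 * k * (k-1) / 2 ≤ (k*k-k)/2 + (k*k-k) := by
    obtain ⟨c, hc⟩ : 2 ∣ k * (k-1) := (Nat.even_mul_pred_self k).two_dvd
    have hkk : k*k - k = k*(k-1) := by rw [Nat.mul_sub, mul_one]
    rw [hkk, hc, mul_assoc, hc]
    omega
  omega

theorem ofReal_half : ENNReal.ofReal (1/2 : ℝ) = 2⁻¹ := by
  rw [one_div, ENNReal.ofReal_inv_of_pos two_pos, ENNReal.ofReal_ofNat]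

theorem cylinder_measure (n : ℕ) (S : Finset (Sym2 (Fin n))) :
    erMeasure n (1/2) (by norm_num) {ω | ∀ e ∈ S, ω e = true} = (2 : ℝ≥0∞)⁻¹ ^ S.card := by
  classical
  have hset : {ω : Sym2 (Fin n) → Bool | ∀ e ∈ S, ω e = true}
      = Set.pi Set.univ (fun e => if e ∈ S then ({true} : Set Bool) else Set.univ) := by
    ext ω
    simp only [Set.mem_setOf_eq, Set.mem_pi, Set.mem_univ, forall_true_left]
    constructor
    · intro h i
      split_ifs with hi
      · simpa using h i hi
      · trivial
    · intro h e he
      have := h e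
      rw [if_pos he] at this
      simpa using this
  rw [erMeasure, hset, Measure.pi_pi]
  have hsingle : (PMF.bernoulli (Real.toNNReal (1/2 : ℝ))
      (Real.toNNReal_le_one.mpr (by norm_num))).toMeasure {true} = 2⁻¹ := by
    rw [PMF.toMeasure_apply_singleton _ _ (measurableSet_singleton _), PMF.bernoulli_apply]
    exact ofReal_half
  calc (∏ e : Sym2 (Fin n), (PMF.bernoulli (Real.toNNReal (1/2 : ℝ))
        (Real.toNNReal_le_one.mpr (by norm_num))).toMeasure
          (if e ∈ S then ({true} : Set Bool) else Set.univ))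
      = ∏ e : Sym2 (Fin n), (if e ∈ S then (2:ℝ≥0∞)⁻¹ else 1) := by
        apply Finset.prod_congr rfl
        intro e _
        split_ifs with he
        · exact hsingle
        · exact measure_univ
    _ = (2:ℝ≥0∞)⁻¹ ^ S.card := by
        rw [Finset.prod_ite_mem, Finset.univ_inter, Finset.prod_const]

theorem part1 (ε : ℝ) (hε : 0 < ε) (k : ℕ → ℕ)
    (hk : ∀ n : ℕ, (4/3 + ε) * Real.logb 2 n < k n) :
    Tendsto (fun n : ℕ => ((2 * k n).factorial : ℝ) * (n.choose (2 * k n)) *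
        (1/2 : ℝ) ^ (3 * k n * (k n - 1) / 2)) atTop (nhds 0) := by
  apply tendsto_of_tendsto_of_tendsto_of_le_of_le' tendsto_const_nhds
    tendsto_one_div_atTop_nhds_zero_nat
  · exact Eventually.of_forall fun n => by positivity
  · have hN : ∀ᶠ n : ℕ in atTop, (5/3 : ℝ) ≤ ε * Real.logb 2 n ∧ 2 ≤ n := by
      have h1 : Tendsto (fun n : ℕ => ε * Real.logb 2 n) atTop atTop := by
        apply Tendsto.const_mul_atTop hε
        exact (Real.tendsto_logb_atTop (by norm_num)).comp tendsto_natCast_atTop_atTop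
      filter_upwards [h1.eventually_ge_atTop (5/3), eventually_ge_atTop 2] with n h2 h3
      exact ⟨h2, h3⟩
    filter_upwards [hN] with n ⟨hεL, hn2⟩
    set K := k n with hK
    have hnpos : (0:ℝ) < n := by positivity
    have hn1 : (1:ℝ) < n := by exact_mod_cast hn2
    set L := Real.logb 2 n with hL
    have hLpos : 0 < L := Real.logb_pos (by norm_num) hn1
    have hkL : (4/3 + ε) * L < K := hk n
    have hKpos : 0 < K := by
      by_contra h
      push_neg at h
      interval_cases K
      · simp at hkL; nlinarith
    set m := 3 * K * (K - 1) / 2 with hmdef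
    have hdf : ((2 * K).factorial : ℝ) * (n.choose (2 * K)) ≤ (n:ℝ) ^ (2*K) := by
      rw [← Nat.cast_mul, ← Nat.descFactorial_eq_factorial_mul_choose]
      exact_mod_cast Nat.cast_le.mpr (Nat.descFactorial_le_pow n (2*K))
    have hc1 : ((K - 1 : ℕ) : ℝ) = (K:ℝ) - 1 := by
      rw [Nat.cast_sub hKpos, Nat.cast_one]
    have hm : ((m : ℕ) : ℝ) = 3 * (K:ℝ) * ((K:ℝ)-1) / 2 := by
      obtain ⟨c, hc⟩ : 2 ∣ K * (K-1) := (Nat.even_mul_pred_self K).two_dvd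
      have h3 : m = 3 * c := by
        rw [hmdef, mul_assoc]
        omega
      rw [h3]
      have : (K:ℝ) * (((K:ℝ)) - 1) = 2 * c := by
        rw [← hc1]
        exact_mod_cast congrArg Nat.cast hc
      push_cast
      nlinarith
    have h2L : (2:ℝ) ^ L = n := Real.rpow_logb (by norm_num) (by norm_num) hnpos
    calc ((2 * K).factorial : ℝ) * (n.choose (2 * K)) * (1/2 : ℝ) ^ m
        ≤ (n:ℝ) ^ (2*K) * (1/2 : ℝ) ^ m := by
          apply mul_le_mul_of_nonneg_right hdf (by positivity)
      _ = (2:ℝ) ^ (((2*K:ℕ):ℝ) * L - (m:ℝ)) := by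
          have e1 : (2:ℝ) ^ (((2*K:ℕ):ℝ) * L) = (n:ℝ)^(2*K) := by
            rw [mul_comm, Real.rpow_mul (by norm_num), h2L, Real.rpow_natCast]
          rw [Real.rpow_sub (by norm_num), e1, Real.rpow_natCast, one_div, inv_pow,
            div_eq_mul_inv]
      _ ≤ (2:ℝ) ^ (-L) := by
          apply Real.rpow_le_rpow_of_exponent_le (by norm_num)
          rw [hm]
          push_cast
          have hKnn : (0:ℝ) ≤ K := Nat.cast_nonneg K
          have hfac : 2*L - (3/2)*((K:ℝ)-1) ≤ -1 := by nlinarith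
          have hprod : (K:ℝ)*(2*L - (3/2)*((K:ℝ)-1)) ≤ (K:ℝ)*(-1) :=
            mul_le_mul_of_nonneg_left hfac hKnn
          nlinarith
      _ = 1 / n := by
          rw [Real.rpow_neg (by norm_num), h2L, one_div]

theorem measure_bound (n K : ℕ) :
    erMeasure n (1/2) (by norm_num)
        {ω | ∃ f : Xgraph K →g graphOf ω, Function.Injective f}
      ≤ (n.descFactorial (2*K) : ℝ≥0∞) * (2 : ℝ≥0∞)⁻¹ ^ (3 * K * (K - 1) / 2) := by
  classical
  set μ := erMeasure n (1/2) (by norm_num : (1:ℝ)/2 ≤ 1) with hμ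
  set A : ((Fin K ⊕ Fin K) ↪ Fin n) → Set (Sym2 (Fin n) → Bool) :=
    fun g => {ω | ∀ e ∈ (Xgraph K).edgeFinset.image (Sym2.map g), ω e = true} with hA
  have hsub : {ω : Sym2 (Fin n) → Bool | ∃ f : Xgraph K →g graphOf ω, Function.Injective f}
      ⊆ ⋃ g : (Fin K ⊕ Fin K) ↪ Fin n, A g := by
    rintro ω ⟨f, hf⟩
    refine Set.mem_iUnion.mpr ⟨⟨f, hf⟩, ?_⟩
    intro e he
    rcases Finset.mem_image.mp he with ⟨e', he', rfl⟩
    revert he'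
    refine Sym2.ind (fun a b hmem => ?_) e'
    rw [SimpleGraph.mem_edgeFinset, SimpleGraph.mem_edgeSet] at hmem
    have hadj : (graphOf ω).Adj (f a) (f b) := f.map_adj hmem
    simp only [graphOf, SimpleGraph.fromEdgeSet_adj] at hadj
    simp only [Sym2.map_pair_eq]
    exact hadj.1
  calc μ {ω : Sym2 (Fin n) → Bool | ∃ f : Xgraph K →g graphOf ω, Function.Injective f}
      ≤ μ (⋃ g : (Fin K ⊕ Fin K) ↪ Fin n, A g) := measure_mono hsub
    _ ≤ ∑' g : (Fin K ⊕ Fin K) ↪ Fin n, μ (A g) := measure_iUnion_le _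
    _ = ∑ g : (Fin K ⊕ Fin K) ↪ Fin n, μ (A g) := tsum_fintype _
    _ ≤ ∑ _g : (Fin K ⊕ Fin K) ↪ Fin n, (2 : ℝ≥0∞)⁻¹ ^ (3 * K * (K - 1) / 2) := by
        apply Finset.sum_le_sum
        intro g _
        have hEq : μ (A g) = (2 : ℝ≥0∞)⁻¹ ^ ((Xgraph K).edgeFinset.image (Sym2.map g)).card :=
          cylinder_measure n _
        rw [hEq, Finset.card_image_of_injective _ (Sym2.map.injective g.injective)]
        exact pow_le_pow_right_of_le_one' (by norm_num) (Xgraph_edge_lb K)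
    _ = (Fintype.card ((Fin K ⊕ Fin K) ↪ Fin n) : ℝ≥0∞) *
          (2 : ℝ≥0∞)⁻¹ ^ (3 * K * (K - 1) / 2) := by
        rw [Finset.sum_const, Finset.card_univ, nsmul_eq_mul]
    _ = (n.descFactorial (2*K) : ℝ≥0∞) * (2 : ℝ≥0∞)⁻¹ ^ (3 * K * (K - 1) / 2) := by
        rw [Fintype.card_embedding_eq, Fintype.card_sum, Fintype.card_fin, Fintype.card_fin]
        norm_num [two_mul]

/-- If `ε > 0` and `k = k(n) > (4/3 + ε) log₂ n`, then
`(2k)! * choose n (2k) * 2^{-3k(k-1)/2} → 0`; hence `G(n, 1/2)` asymptotically almost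
surely contains no subgraph isomorphic to `X_k`. -/
theorem aas_no_Xk_subgraph (ε : ℝ) (hε : 0 < ε) (k : ℕ → ℕ)
    (hk : ∀ n : ℕ, (4/3 + ε) * Real.logb 2 n < k n) :
    Tendsto (fun n : ℕ => ((2 * k n).factorial : ℝ) * (n.choose (2 * k n)) *
        (1/2 : ℝ) ^ (3 * k n * (k n - 1) / 2)) atTop (nhds 0) ∧
    Tendsto (fun n : ℕ => erMeasure n (1/2) (by norm_num)
        {ω | ∃ f : Xgraph (k n) →g graphOf ω, Function.Injective f})
      atTop (nhds 0) := by
  have h1 := part1 ε hε k hk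
  refine ⟨h1, ?_⟩
  have hb : Tendsto (fun n : ℕ => ENNReal.ofReal (((2 * k n).factorial : ℝ) *
      (n.choose (2 * k n)) * (1/2 : ℝ) ^ (3 * k n * (k n - 1) / 2))) atTop (nhds 0) := by
    have := (ENNReal.continuous_ofReal.tendsto 0).comp h1
    simpa [Function.comp_def] using this
  apply tendsto_of_tendsto_of_tendsto_of_le_of_le tendsto_const_nhds hb
  · exact fun n => zero_le
  · intro n
    refine (measure_bound n (k n)).trans_eq ?_
    dsimp only
    rw [ENNReal.ofReal_mul (by positivity), ENNReal.ofReal_mul (by positivity),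
      ENNReal.ofReal_pow (by norm_num), ofReal_half,
      ENNReal.ofReal_natCast, ENNReal.ofReal_natCast,
      Nat.descFactorial_eq_factorial_mul_choose, Nat.cast_mul]
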